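/- In the symplectic Schur module construction, applying an alternating relation or an exchange relation to a symplectic relation S_F = Σ_i (F_i − F_i') yields a linear combination of symplectic relations; hence the span of the symplectic relations in the tensor power T^r(ℂ^{2n}) descends to a well-defined subspace of the GL Schur module E^λ, and the quotient E^{λ,f} is well defined. -/
import Mathlib


open PiTensorProduct
open scoped TensorProduct

/-- Applying an alternating relation or an exchange relation to a symplectic relation
`S_F = Σ_i (F_i − F_i')` yields a linear combination of symplectic relations. Since the
alternating and exchange operations are (signed sums of) place permutations of the
tensor factors, this is the statement that the span of the symplectic relations in
`T^r(ℂ^{2n})` is stable under every place permutation of the factors; hence it descends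
to a well-defined subspace of the GL Schur module `E^λ`, and the symplectic Schur
module `E^{λ,f}` is well defined. -/
theorem symplectic_relations_stable_under_place_permutations (n r : ℕ)
    (SymSpan : Submodule ℂ (⨂[ℂ] (_ : Fin r), ((Fin n ⊕ Fin n) → ℂ)))
    (hSym : SymSpan = Submodule.span ℂ
      {x | ∃ (v : Fin r → ((Fin n ⊕ Fin n) → ℂ)) (p q : Fin r), p ≠ q ∧
        x = ∑ i : Fin n,
          (tprod ℂ (Function.update (Function.update v p
              (Pi.single (Sum.inl i) 1)) q (Pi.single (Sum.inr i) 1))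
           - tprod ℂ (Function.update (Function.update v p
              (Pi.single (Sum.inr i) 1)) q (Pi.single (Sum.inl i) 1)))}) :
    ∀ σ : Equiv.Perm (Fin r),
      Submodule.map
        (PiTensorProduct.reindex ℂ (fun _ : Fin r => (Fin n ⊕ Fin n) → ℂ) σ).toLinearMap
        SymSpan = SymSpan := by
  set S : Set (⨂[ℂ] (_ : Fin r), ((Fin n ⊕ Fin n) → ℂ)) :=
    {x | ∃ (v : Fin r → ((Fin n ⊕ Fin n) → ℂ)) (p q : Fin r), p ≠ q ∧
        x = ∑ i : Fin n,
          (tprod ℂ (Function.update (Function.update v p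
              (Pi.single (Sum.inl i) 1)) q (Pi.single (Sum.inr i) 1))
           - tprod ℂ (Function.update (Function.update v p
              (Pi.single (Sum.inr i) 1)) q (Pi.single (Sum.inl i) 1)))} with hS
  have key : ∀ σ : Equiv.Perm (Fin r),
      Submodule.map
        (PiTensorProduct.reindex ℂ (fun _ : Fin r => (Fin n ⊕ Fin n) → ℂ) σ).toLinearMap
        SymSpan ≤ SymSpan := by
    intro σ
    rw [hSym, Submodule.map_span]
    apply Submodule.span_mono
    rintro _ ⟨x, ⟨v, p, q, hpq, rfl⟩, rfl⟩
    refine ⟨v ∘ σ.symm, σ p, σ q, fun h => hpq (σ.injective h), ?_⟩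
    simp only [LinearEquiv.coe_coe, map_sum, map_sub, reindex_tprod]
    refine Finset.sum_congr rfl fun i _ => ?_
    have h : ∀ a b : (Fin n ⊕ Fin n) → ℂ,
        (fun j => Function.update (Function.update v p a) q b (σ.symm j)) =
          Function.update (Function.update (v ∘ σ.symm) (σ p) a) (σ q) b := by
      intro a b
      funext j
      simp only [← Function.comp_apply (g := σ.symm), Function.update_comp_equiv,
        Equiv.symm_symm]
    rw [h, h]
  intro σ
  refine le_antisymm (key σ) fun x hx => ?_
  have hx' : (PiTensorProduct.reindex ℂ (fun _ : Fin r => (Fin n ⊕ Fin n) → ℂ) σ.symm)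
      x ∈ SymSpan := key σ.symm ⟨x, hx, rfl⟩
  refine ⟨_, hx', ?_⟩
  simp [← PiTensorProduct.reindex_symm]
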